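/- Every minimum grounding set of a finite directed graph G is a subset of the grounding kernel K_G of G. -/

import Mathlib

/-- Every minimum grounding set of `G` is contained in the grounding kernel. -/
theorem min_grounding_subset_kernel {V : Type*} [Fintype V] (E : V → V → Prop)
    (R : Set V → Set V)
    (hR : ∀ U, R U = U ∪ {v | ∀ u, E u v → u ∈ U})
    (Rstar : Set V → Set V)
    (hRstar : ∀ U, Rstar U = ⋃ k : ℕ, R^[k] U)
    (V' : Set V)
    (hV' : V' = {u | {w | Relation.ReflTransGen E u w ∧
      Relation.ReflTransGen E w u} = {u} ∧ ¬ E u u})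
    (Nstar : V → Set V)
    (hNstar : ∀ u, Nstar u = {v | Relation.ReflTransGen E u v})
    (K : Set V)
    (hK : K = Set.univ \ {u | u ∈ V' ∧ Nstar u ⊆ V'})
    (U : Set V)
    (hground : Rstar U = Set.univ)
    (hmin : ∀ W : Set V, Rstar W = Set.univ → U.ncard ≤ W.ncard) :
    U ⊆ K := by
  intro u hu
  by_contra hnotK
  rw [hK] at hnotK
  have huV' : u ∈ V' ∧ Nstar u ⊆ V' := by simpa using hnotK
  obtain ⟨huV, hNsub⟩ := huV'
  have huNstar : u ∈ Nstar u := by rw [hNstar]; exact Relation.ReflTransGen.refl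
  -- basic monotonicity facts about R
  have hmonoR : ∀ S S' : Set V, S ⊆ S' → R S ⊆ R S' := by
    intro S S' hss v hv
    rw [hR] at hv ⊢
    rcases hv with hv | hv
    · exact Or.inl (hss hv)
    · exact Or.inr fun p hp => hss (hv p hp)
  have hsub : ∀ S : Set V, S ⊆ R S := by
    intro S v hv; rw [hR]; exact Or.inl hv
  have hiter_mono : ∀ (k : ℕ) (S S' : Set V), S ⊆ S' → R^[k] S ⊆ R^[k] S' := by
    intro k
    induction k with
    | zero => intro S S' h; simpa using h
    | succ k ih =>
      intro S S' h
      rw [Function.iterate_succ_apply, Function.iterate_succ_apply]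
      exact ih _ _ (hmonoR _ _ h)
  have hchain : ∀ (S : Set V), Monotone fun k => R^[k] S := by
    intro S
    apply monotone_nat_of_le_succ
    intro k
    rw [Function.iterate_succ_apply]
    exact hiter_mono k _ _ (hsub S)
  -- the candidate smaller grounding set
  have hWT : ∀ k, R^[k] (U \ {u}) ⊆ Rstar (U \ {u}) := by
    intro k v hv; rw [hRstar]; exact Set.mem_iUnion.2 ⟨k, hv⟩
  have hTclosed : R (Rstar (U \ {u})) ⊆ Rstar (U \ {u}) := by
    intro v hv
    rw [hR] at hv
    rcases hv with hv | hv
    · exact hv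
    · have hex : ∀ p : V, ∃ k, E p v → p ∈ R^[k] (U \ {u}) := by
        intro p
        by_cases hp : E p v
        · have h1 := hv p hp
          rw [hRstar] at h1
          obtain ⟨k, hk⟩ := Set.mem_iUnion.1 h1
          exact ⟨k, fun _ => hk⟩
        · exact ⟨0, fun h => absurd h hp⟩
      choose f hf using hex
      have : v ∈ R^[(Finset.univ.sup f) + 1] (U \ {u}) := by
        rw [Function.iterate_succ_apply', hR]
        exact Or.inr fun p hp =>
          hchain (U \ {u}) (Finset.le_sup (Finset.mem_univ p)) (hf p hp)
      exact hWT _ this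
  -- Fact A: vertices not reachable from u are grounded without u
  have factA : ∀ k, ∀ w, w ∉ Nstar u → w ∈ R^[k] U → w ∈ R^[k] (U \ {u}) := by
    intro k
    induction k with
    | zero =>
      intro w hw hwU
      simp only [Function.iterate_zero, id_eq] at hwU ⊢
      refine ⟨hwU, ?_⟩
      simp only [Set.mem_singleton_iff]
      rintro rfl
      exact hw huNstar
    | succ k ih =>
      intro w hw hwU
      rw [Function.iterate_succ_apply', hR] at hwU ⊢
      rcases hwU with h | h
      · exact Or.inl (ih w hw h)
      · refine Or.inr fun p hp => ih p ?_ (h p hp)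
        intro hpN
        apply hw
        rw [hNstar] at hpN ⊢
        exact hpN.tail hp
  -- well-foundedness of E restricted to Nstar u (acyclicity)
  have hwf : WellFounded (fun a b : V => E a b ∧ a ∈ Nstar u ∧ b ∈ Nstar u) := by
    set r := fun a b : V => E a b ∧ a ∈ Nstar u ∧ b ∈ Nstar u with hr
    have hirr : ∀ a, ¬ Relation.TransGen r a a := by
      intro a ha
      have haN : a ∈ Nstar u := by
        cases ha with
        | single h => exact h.2.1
        | tail _ h => exact h.2.2
      have haV : a ∈ V' := hNsub haN
      rw [hV'] at haV
      obtain ⟨hscc, hne⟩ := haV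
      cases ha with
      | single h => exact hne h.1
      | tail hab hba =>
        rename_i b
        have h1 : Relation.ReflTransGen E a b :=
          (Relation.TransGen.mono (r := r) (p := E) (fun x y h => h.1 : ∀ x y, r x y → E x y) a b hab).to_reflTransGen
        have h2 : Relation.ReflTransGen E b a := Relation.ReflTransGen.single hba.1
        have hbmem : b ∈ ({a} : Set V) := by
          rw [← hscc]; exact ⟨h1, h2⟩
        simp only [Set.mem_singleton_iff] at hbmem
        subst hbmem
        exact hne hba.1
    haveI : IsIrrefl V (Relation.TransGen r) := ⟨hirr⟩
    exact Subrelation.wf (fun {a b} h => Relation.TransGen.single h)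
      (Finite.wellFounded_of_trans_of_irrefl _)
  -- Fact B: vertices reachable from u are grounded without u
  have factB : ∀ v, v ∈ Nstar u → v ∈ Rstar (U \ {u}) := by
    intro v
    induction v using WellFounded.induction hwf with
    | _ x ih =>
      intro hxN
      have hall : ∀ p, E p x → p ∈ Rstar (U \ {u}) := by
        intro p hp
        by_cases hpN : p ∈ Nstar u
        · exact ih p ⟨hp, hpN, hxN⟩ hpN
        · have h1 : p ∈ Rstar U := by rw [hground]; trivial
          rw [hRstar] at h1
          obtain ⟨k, hk⟩ := Set.mem_iUnion.1 h1
          exact hWT k (factA k p hpN hk)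
      exact hTclosed (by rw [hR]; exact Or.inr hall)
  -- main: everything grounded by U is grounded by U \ {u}
  have main : ∀ k, ∀ v, v ∈ R^[k] U → v ∈ Rstar (U \ {u}) := by
    intro k
    induction k with
    | zero =>
      intro v hv
      simp only [Function.iterate_zero, id_eq] at hv
      by_cases hvu : v = u
      · subst hvu; exact factB v huNstar
      · exact hWT 0 (by simp only [Function.iterate_zero, id_eq]; exact ⟨hv, hvu⟩)
    | succ k ih =>
      intro v hv
      rw [Function.iterate_succ_apply', hR] at hv
      rcases hv with h | h
      · exact ih v h
      · exact hTclosed (by rw [hR]; exact Or.inr fun p hp => ih p (h p hp))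
  have hground' : Rstar (U \ {u}) = Set.univ := by
    apply Set.eq_univ_of_univ_subset
    intro v _
    have h1 : v ∈ Rstar U := by rw [hground]; trivial
    rw [hRstar] at h1
    obtain ⟨k, hk⟩ := Set.mem_iUnion.1 h1
    exact main k v hk
  have h1 := hmin _ hground'
  have h2 : (U \ {u}).ncard < U.ncard :=
    Set.ncard_diff_singleton_lt_of_mem hu (Set.toFinite U)
  omega
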